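/- Let g₁,…,gₙ be vectors in a real inner product space, let 0 ≤ f < n, and let S, H ⊆ {1,…,n} with |S| = |H| = n − f such that ‖gⱼ‖ ≤ ‖gₖ‖ whenever j ∈ S and k ∉ S. Then ‖Σ_{j∈S} gⱼ‖² ≤ (n − f) · Σ_{j∈H} ‖gⱼ‖². -/

import Mathlib

/-- Eqns. (42)–(44) of Appendix A-C: the squared norm of the aggregate of the `n − f`
gradients retained by the CGE gradient-filter is at most `n − f` times the sum of the
squared norms of the gradients of any set `H` of `n − f` indices. -/
theorem cge_aggregate_sq_norm_le {E : Type*} [NormedAddCommGroup E]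
    [InnerProductSpace ℝ E] {n f : ℕ} (hfn : f < n) (g : Fin n → E)
    (S H : Finset (Fin n)) (hS : S.card = n - f) (hH : H.card = n - f)
    (hfilter : ∀ j ∈ S, ∀ k ∉ S, ‖g j‖ ≤ ‖g k‖) :
    ‖∑ j ∈ S, g j‖ ^ 2 ≤ ((n : ℝ) - (f : ℝ)) * ∑ j ∈ H, ‖g j‖ ^ 2 := by
  have hcard : (S \ H).card = (H \ S).card :=
    Finset.card_sdiff_comm (hS.trans hH.symm)
  have hfc : (Fintype.card (S \ H : Finset (Fin n)) = Fintype.card (H \ S : Finset (Fin n))) :=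
    (Fintype.card_coe _).trans (hcard.trans (Fintype.card_coe _).symm)
  let e := Fintype.equivOfCardEq hfc
  have hsum_diff : ∑ j ∈ S \ H, ‖g j‖ ^ 2 ≤ ∑ k ∈ H \ S, ‖g k‖ ^ 2 := by
    rw [← Finset.sum_coe_sort (S \ H) (fun j => ‖g j‖ ^ 2),
        ← Finset.sum_coe_sort (H \ S) (fun j => ‖g j‖ ^ 2), ← Equiv.sum_comp e]
    refine Finset.sum_le_sum fun x _ => ?_
    have hxS : (x : Fin n) ∈ S := (Finset.mem_sdiff.mp x.2).1
    have hkS : ((e x : (H \ S : Finset (Fin n))) : Fin n) ∉ S :=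
      (Finset.mem_sdiff.mp (e x).2).2
    exact pow_le_pow_left₀ (norm_nonneg _) (hfilter _ hxS _ hkS) 2
  have hsum : ∑ j ∈ S, ‖g j‖ ^ 2 ≤ ∑ j ∈ H, ‖g j‖ ^ 2 := by
    rw [← Finset.sum_inter_add_sum_sdiff S H (fun j => ‖g j‖ ^ 2),
        ← Finset.sum_inter_add_sum_sdiff H S (fun j => ‖g j‖ ^ 2),
        Finset.inter_comm H S]
    exact add_le_add_right hsum_diff _
  have h1 : ‖∑ j ∈ S, g j‖ ^ 2 ≤ (∑ j ∈ S, ‖g j‖) ^ 2 :=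
    pow_le_pow_left₀ (norm_nonneg _) (norm_sum_le _ _) 2
  have h2 : (∑ j ∈ S, ‖g j‖) ^ 2 ≤ (S.card : ℝ) * ∑ j ∈ S, ‖g j‖ ^ 2 :=
    sq_sum_le_card_mul_sum_sq
  have hcardval : (S.card : ℝ) = (n : ℝ) - (f : ℝ) := by
    rw [hS]; push_cast [Nat.cast_sub hfn.le]; ring
  calc ‖∑ j ∈ S, g j‖ ^ 2 ≤ (S.card : ℝ) * ∑ j ∈ S, ‖g j‖ ^ 2 := h1.trans h2
    _ = ((n : ℝ) - (f : ℝ)) * ∑ j ∈ S, ‖g j‖ ^ 2 := by rw [hcardval]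
    _ ≤ ((n : ℝ) - (f : ℝ)) * ∑ j ∈ H, ‖g j‖ ^ 2 := by
        refine mul_le_mul_of_nonneg_left hsum (sub_nonneg.mpr ?_)
        exact_mod_cast hfn.le
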